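/- (Standard (m,n)-normal form.) Under the hypotheses and conclusion of the normal form theorem (so that \widehat{\mathring{φ}}(ξ) = (1,0,…,0)^T + O(‖ξ‖^n) and \widehat{\mathring{υ}}(ξ) = (1,0,…,0) + O(‖ξ‖^m) as ξ → 0), define \widehat{\mathring{a}}(ξ) := \widehat{U}(M^T ξ)\widehat{a}(ξ)\widehat{U}(ξ)^{−1} and write it in block form with (1,1)-block \widehat{\mathring{a}_{1,1}} of size 1×1, (1,2)-block 1×(r−1), (2,1)-block (r−1)×1 and (2,2)-block (r−1)×(r−1). Then: \widehat{\mathring{a}_{1,1}}(ξ) = 1 + O(‖ξ‖^n); \widehat{\mathring{a}_{1,1}}(ξ+2πω) = O(‖ξ‖^m) for all ω ∈ Ω_M\{0}; \widehat{\mathring{a}_{1,2}}(ξ+2πω) = O(‖ξ‖^m) for all ω ∈ Ω_M; and \widehat{\mathring{a}_{2,1}}(ξ) = O(‖ξ‖^n), all as ξ → 0. Moreover \widehat{\mathring{φ}}(M^T ξ) = \widehat{\mathring{a}}(ξ)\widehat{\mathring{φ}}(ξ) and \mathring{a} has order m sum rules with respect to M with matching filter \mathring{υ}. -/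

import Mathlib

open scoped BigOperators Classical
open Complex Matrix

noncomputable section

abbrev Zd (d : ℕ) := Fin d → ℤ
abbrev Rd (d : ℕ) := Fin d → ℝ

/-- real dot product `k·ξ` of an integer vector with a real vector -/
def dotZR {d : ℕ} (k : Zd d) (ξ : Rd d) : ℝ := ∑ j, (k j : ℝ) * ξ j

/-- complex dot product of an integer vector with a complex vector -/
def dotZC {d : ℕ} (k : Zd d) (ξ : Fin d → ℂ) : ℂ := ∑ j, (k j : ℂ) * ξ j

/-- the symbol (Fourier series) `û(ξ) = Σ_k u(k) e^{-ik·ξ}` of a finitely supported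
matrix-valued filter -/
def symbol {d r s : ℕ} (u : Zd d →₀ Matrix (Fin r) (Fin s) ℂ) (ξ : Rd d) :
    Matrix (Fin r) (Fin s) ℂ :=
  u.sum fun k A => Complex.exp (-(Complex.I * (dotZR k ξ : ℂ))) • A

/-- the symbol evaluated at a complex frequency `ξ ∈ ℂ^d` -/
def symbolC {d r s : ℕ} (u : Zd d →₀ Matrix (Fin r) (Fin s) ℂ) (ξ : Fin d → ℂ) :
    Matrix (Fin r) (Fin s) ℂ :=
  u.sum fun k A => Complex.exp (-(Complex.I * dotZC k ξ)) • A

/-- symbol of a scalar filter -/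
def symbolS {d : ℕ} (u : Zd d →₀ ℂ) (ξ : Rd d) : ℂ :=
  u.sum fun k c => Complex.exp (-(Complex.I * (dotZR k ξ : ℂ))) * c

/-- a filter is strongly invertible if the inverse of its symbol is again a matrix of
`2πℤ^d`-periodic trigonometric polynomials -/
def StronglyInvertible {d r : ℕ} (u : Zd d →₀ Matrix (Fin r) (Fin r) ℂ) : Prop :=
  ∃ v : Zd d →₀ Matrix (Fin r) (Fin r) ℂ,
    ∀ ξ : Rd d, symbol u ξ * symbol v ξ = 1 ∧ symbol v ξ * symbol u ξ = 1

/-- convolution `[v * u](n) = Σ_k v(k) u(n-k)` of an arbitrary (row-vector valued)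
sequence with a finitely supported matrix filter -/
def convSeq {d r s : ℕ} (v : Zd d → Matrix (Fin 1) (Fin r) ℂ)
    (u : Zd d →₀ Matrix (Fin r) (Fin s) ℂ) : Zd d → Matrix (Fin 1) (Fin s) ℂ :=
  fun n => u.sum fun k A => v (n - k) * A

/-- `f(ξ) = O(‖ξ‖^m)` as `ξ → 0`: all partial derivatives of total order `< m`
vanish at the origin -/
def vanishesTo {d : ℕ} (m : ℕ) (f : Rd d → ℂ) : Prop :=
  ∀ j, j < m → iteratedFDeriv ℝ j f 0 = 0

/-- `M^T ξ` for an integer matrix `M` and a real vector `ξ` -/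
def mulVecT {d : ℕ} (M : Matrix (Fin d) (Fin d) ℤ) (ξ : Rd d) : Rd d :=
  fun i => ∑ j, (M j i : ℝ) * ξ j

/-- `M k` for an integer matrix `M` and an integer vector `k` -/
def mulVecZ {d : ℕ} (M : Matrix (Fin d) (Fin d) ℤ) (k : Zd d) : Zd d :=
  fun i => ∑ j, M i j * k j

/-- `Ω_M := (M^{-T} ℤ^d) ∩ [0,1)^d` -/
def OmegaSet {d : ℕ} (M : Matrix (Fin d) (Fin d) ℤ) : Set (Rd d) :=
  {ω | (∀ i, ∃ z : ℤ, mulVecT M ω i = (z : ℝ)) ∧ ∀ i, 0 ≤ ω i ∧ ω i < 1}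

/-- a dilation matrix: an integer matrix all of whose (complex) eigenvalues
are greater than one in modulus -/
def IsDilation {d : ℕ} (M : Matrix (Fin d) (Fin d) ℤ) : Prop :=
  ∀ μ ∈ spectrum ℂ (M.map fun z => (z : ℂ)), 1 < ‖μ‖

/-- `a` has order `m` sum rules with respect to `M` with matching filter `vgu` -/
def HasSumRules {d r : ℕ} (M : Matrix (Fin d) (Fin d) ℤ) (m : ℕ)
    (a : Zd d →₀ Matrix (Fin r) (Fin r) ℂ)
    (vgu : Zd d →₀ Matrix (Fin 1) (Fin r) ℂ) : Prop :=
  symbol vgu 0 ≠ 0 ∧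
  ∀ ω ∈ OmegaSet M, ∀ i : Fin r,
    vanishesTo m (fun ξ =>
      (symbol vgu (mulVecT M ξ) * symbol a (ξ + (2 * Real.pi) • ω)) 0 i -
      (if ω = (0 : Rd d) then 1 else 0) * (symbol vgu ξ) 0 i)

/-- the symbol of the `γ`-coset sequence `u^{[γ;M]}(k) = u(γ + Mk)` -/
def cosetSymbol {d r s : ℕ} (M : Matrix (Fin d) (Fin d) ℤ)
    (u : Zd d → Matrix (Fin r) (Fin s) ℂ) (γ : Zd d) (ξ : Rd d) :
    Matrix (Fin r) (Fin s) ℂ :=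
  ∑ᶠ p : Zd d, Complex.exp (-(Complex.I * (dotZR p ξ : ℂ))) • u (γ + mulVecZ M p)

/-- scalar version of the coset symbol -/
def cosetSymbolF {d : ℕ} (N : Matrix (Fin d) (Fin d) ℤ) (u : Zd d → ℂ) (γ : Zd d)
    (ξ : Rd d) : ℂ :=
  ∑ᶠ p : Zd d, Complex.exp (-(Complex.I * (dotZR p ξ : ℂ))) * u (γ + mulVecZ N p)

/-- subdivision operator `S_{u,M} w = |det M|^{1/2} (w↑M) * u` -/
def sdOp {d p q : ℕ} (M : Matrix (Fin d) (Fin d) ℤ) (u : Zd d →₀ Matrix (Fin p) (Fin q) ℂ)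
    (w : Zd d → Matrix (Fin 1) (Fin p) ℂ) : Zd d → Matrix (Fin 1) (Fin q) ℂ :=
  fun n => (Real.sqrt (M.det.natAbs) : ℂ) • ∑ᶠ k : Zd d, w k * u (n - mulVecZ M k)

/-- transition operator `T_{u,M} v = |det M|^{1/2} (v * u^*)(M·)` -/
def tzOp {d p q : ℕ} (M : Matrix (Fin d) (Fin d) ℤ) (u : Zd d →₀ Matrix (Fin p) (Fin q) ℂ)
    (v : Zd d → Matrix (Fin 1) (Fin q) ℂ) : Zd d → Matrix (Fin 1) (Fin p) ℂ :=
  fun n => (Real.sqrt (M.det.natAbs) : ℂ) • ∑ᶠ k : Zd d, v k * (u (k - mulVecZ M n))ᴴ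

/-- a polynomial sequence of (total) degree at most `m` -/
def IsPolySeq {d : ℕ} (m : ℕ) (p : Zd d → ℂ) : Prop :=
  ∃ P : MvPolynomial (Fin d) ℂ, P.totalDegree ≤ m ∧
    ∀ k : Zd d, p k = MvPolynomial.eval (fun j => (k j : ℂ)) P

/-- a polynomial sequence of (total) degree less than `m` -/
def IsPolySeqLt {d : ℕ} (m : ℕ) (p : Zd d → ℂ) : Prop :=
  ∃ P : MvPolynomial (Fin d) ℂ, P.totalDegree < m ∧
    ∀ k : Zd d, p k = MvPolynomial.eval (fun j => (k j : ℂ)) P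

/-- convolution `p * y` of a (scalar) polynomial sequence with a finitely supported
row-vector filter -/
def polyConv {d r : ℕ} (p : Zd d → ℂ) (y : Zd d →₀ Matrix (Fin 1) (Fin r) ℂ) :
    Zd d → Matrix (Fin 1) (Fin r) ℂ :=
  fun n => y.sum fun j A => p (n - j) • A

/-- the standard vector conversion operator `E_N` associated with `N` and the coset
representatives `s` -/
def ENop {d r : ℕ} (N : Matrix (Fin d) (Fin d) ℤ) (s : Fin r → Zd d)
    (v : Zd d → ℂ) : Zd d → Matrix (Fin 1) (Fin r) ℂ :=
  fun k => Matrix.of fun _ j => v (mulVecZ N k + s j)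

/-- the row vector `Υ_N(ξ) = (e^{i N^{-1} s_1 · ξ}, …, e^{i N^{-1} s_r · ξ})` -/
def UpsN {d r : ℕ} (N : Matrix (Fin d) (Fin d) ℤ) (s : Fin r → Zd d) (ξ : Rd d) :
    Matrix (Fin 1) (Fin r) ℂ :=
  Matrix.of fun _ j => Complex.exp (Complex.I *
    ((∑ t, ((N.map fun z => (z : ℝ))⁻¹.mulVec fun i => (s j i : ℝ)) t * ξ t : ℝ) : ℂ))

/-- the sequence `∇^β δ`, whose symbol is `Π_j (1 - e^{-iξ_j})^{β_j}` -/
def nablaDelta {d : ℕ} (β : Fin d → ℕ) : Zd d → ℂ :=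
  fun k => ∏ j, if 0 ≤ k j then ((-1 : ℂ) ^ (k j).toNat * ((β j).choose (k j).toNat : ℂ)) else 0

/-- the matrix `F_{r;M}(ξ) = (e^{-i γ_l · (ξ + 2π ω_k)} I_r)_{l,k}` -/
def FMat {d r n : ℕ} (γ : Fin n → Zd d) (ω : Fin n → Rd d) (ξ : Rd d) :
    Matrix (Fin n × Fin r) (Fin n × Fin r) ℂ :=
  Matrix.of fun li kj =>
    if li.2 = kj.2 then
      Complex.exp (-(Complex.I * (dotZR (γ li.1) (ξ + (2 * Real.pi) • ω kj.1) : ℂ)))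
    else 0

/-- the matrix `D_{u,ω;M}(ξ)` whose `(l,k)`-th `r×r` block is `û(ξ+2πω)` when
`ω_l + ω - ω_k ∈ ℤ^d` and `0` otherwise -/
def DMat {d r n : ℕ} (u : Zd d →₀ Matrix (Fin r) (Fin r) ℂ) (ω : Fin n → Rd d)
    (ωv : Rd d) (ξ : Rd d) : Matrix (Fin n × Fin r) (Fin n × Fin r) ℂ :=
  Matrix.of fun li kj =>
    if ∀ i, ∃ z : ℤ, (ω li.1 + ωv - ω kj.1) i = (z : ℝ) then
      symbol u (ξ + (2 * Real.pi) • ωv) li.2 kj.2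
    else 0

/-- the matrix `E_{u,ω;M}(ξ)` whose `(l,k)`-th block is `û^{[γ_k-γ_l;M]}(ξ) e^{-iγ_k·(2πω)}` -/
def EMat {d r n : ℕ} (M : Matrix (Fin d) (Fin d) ℤ)
    (u : Zd d →₀ Matrix (Fin r) (Fin r) ℂ) (γ : Fin n → Zd d)
    (ωv : Rd d) (ξ : Rd d) : Matrix (Fin n × Fin r) (Fin n × Fin r) ℂ :=
  Matrix.of fun li kj =>
    (Complex.exp (-(Complex.I * (dotZR (γ kj.1) ((2 * Real.pi) • ωv) : ℂ))) •
      cosetSymbol M (fun k => u k) (γ kj.1 - γ li.1) ξ) li.2 kj.2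

/-- the matrix `P_{u;M}(ξ) = [û(ξ+2πω_1), …, û(ξ+2πω_{d_M})]` -/
def PMat {d r sc n : ℕ} (u : Zd d →₀ Matrix (Fin sc) (Fin r) ℂ) (ω : Fin n → Rd d)
    (ξ : Rd d) : Matrix (Fin sc) (Fin n × Fin r) ℂ :=
  Matrix.of fun i kj => symbol u (ξ + (2 * Real.pi) • ω kj.1) i kj.2

/-- the matrix `Q_{u;M}(ξ) = [û^{[γ_1;M]}(ξ), …, û^{[γ_{d_M};M]}(ξ)]` -/
def QMat {d r sc n : ℕ} (M : Matrix (Fin d) (Fin d) ℤ)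
    (u : Zd d →₀ Matrix (Fin sc) (Fin r) ℂ) (γ : Fin n → Zd d)
    (ξ : Rd d) : Matrix (Fin sc) (Fin n × Fin r) ℂ :=
  Matrix.of fun i kj => cosetSymbol M (fun k => u k) (γ kj.1) ξ i kj.2

/-- `j`-fold application of the transition operator with low-pass filter `a`:
the low-pass framelet coefficients `v_j` -/
def tzIter {d r : ℕ} (M : Matrix (Fin d) (Fin d) ℤ)
    (a : Zd d →₀ Matrix (Fin r) (Fin r) ℂ)
    (v0 : Zd d → Matrix (Fin 1) (Fin r) ℂ) : ℕ → Zd d → Matrix (Fin 1) (Fin r) ℂ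
  | 0 => v0
  | j + 1 => tzOp M a (tzIter M a v0 j)

/-- reconstruction: `reconIter … J i = ṽ_{J-i}` for the `J`-level discrete framelet
transform with filter bank `({a;b},{atil;btil})_Θ` applied to input `v0` -/
def reconIter {d r sc : ℕ} (M : Matrix (Fin d) (Fin d) ℤ)
    (a : Zd d →₀ Matrix (Fin r) (Fin r) ℂ) (b : Zd d →₀ Matrix (Fin sc) (Fin r) ℂ)
    (atil : Zd d →₀ Matrix (Fin r) (Fin r) ℂ) (btil : Zd d →₀ Matrix (Fin sc) (Fin r) ℂ)
    (Θ : Zd d →₀ Matrix (Fin r) (Fin r) ℂ)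
    (v0 : Zd d → Matrix (Fin 1) (Fin r) ℂ) (J : ℕ) : ℕ → Zd d → Matrix (Fin 1) (Fin r) ℂ
  | 0 => convSeq (tzIter M a v0 J) Θ
  | i + 1 => fun n =>
      sdOp M atil (reconIter M a b atil btil Θ v0 J i) n +
      sdOp M btil (tzOp M b (tzIter M a v0 (J - i - 1))) n

/-- the `J`-level discrete framelet transform has the perfect reconstruction property:
every input `v0` is exactly and uniquely recovered via the deconvolution `x * Θ = ṽ_0` -/
def PerfectReconstruction {d r sc : ℕ} (M : Matrix (Fin d) (Fin d) ℤ)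
    (a : Zd d →₀ Matrix (Fin r) (Fin r) ℂ) (b : Zd d →₀ Matrix (Fin sc) (Fin r) ℂ)
    (atil : Zd d →₀ Matrix (Fin r) (Fin r) ℂ) (btil : Zd d →₀ Matrix (Fin sc) (Fin r) ℂ)
    (Θ : Zd d →₀ Matrix (Fin r) (Fin r) ℂ) (J : ℕ) : Prop :=
  ∀ v0 : Zd d → Matrix (Fin 1) (Fin r) ℂ,
    convSeq v0 Θ = reconIter M a b atil btil Θ v0 J J ∧
    ∀ x, convSeq x Θ = reconIter M a b atil btil Θ v0 J J → x = v0
/-- the new filter `mra(ξ) := Û(M^Tξ) â(ξ) Û(ξ)^{-1}` -/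
def mraF {d r : ℕ} (M : Matrix (Fin d) (Fin d) ℤ)
    (U Uinv a : Zd d →₀ Matrix (Fin r) (Fin r) ℂ) (ξ : Rd d) :
    Matrix (Fin r) (Fin r) ℂ :=
  symbol U (mulVecT M ξ) * symbol a ξ * symbol Uinv ξ

section Aux

variable {d : ℕ}

lemma contDiff_dotZR (k : Zd d) : ContDiff ℝ ⊤ (fun ξ : Rd d => dotZR k ξ) := by
  unfold dotZR
  exact ContDiff.sum fun j _ =>
    contDiff_const.mul ((ContinuousLinearMap.proj j : Rd d →L[ℝ] ℝ).contDiff)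

lemma contDiff_expdot (k : Zd d) :
    ContDiff ℝ ⊤ (fun ξ : Rd d => Complex.exp (-(Complex.I * (dotZR k ξ : ℂ)))) := by
  apply ContDiff.cexp
  apply ContDiff.neg
  exact contDiff_const.mul (Complex.ofRealCLM.contDiff.comp (contDiff_dotZR k))

lemma symbol_apply {r s : ℕ} (u : Zd d →₀ Matrix (Fin r) (Fin s) ℂ) (ξ : Rd d)
    (i : Fin r) (j : Fin s) :
    symbol u ξ i j = ∑ k ∈ u.support, Complex.exp (-(Complex.I * (dotZR k ξ : ℂ))) * u k i j := by
  unfold symbol Finsupp.sum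
  simp [Matrix.sum_apply, Matrix.smul_apply, smul_eq_mul]

lemma contDiff_symbol {r s : ℕ} (u : Zd d →₀ Matrix (Fin r) (Fin s) ℂ) (i : Fin r) (j : Fin s) :
    ContDiff ℝ ⊤ (fun ξ => symbol u ξ i j) := by
  simp only [symbol_apply]
  exact ContDiff.sum fun k _ => (contDiff_expdot k).mul contDiff_const

lemma symbol_periodic {r s : ℕ} (u : Zd d →₀ Matrix (Fin r) (Fin s) ℂ) (ξ v : Rd d)
    (hv : ∀ i, ∃ z : ℤ, v i = (z : ℝ)) :
    symbol u (ξ + (2 * Real.pi) • v) = symbol u ξ := by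
  choose z hz using hv
  unfold symbol
  apply Finsupp.sum_congr
  intro k _
  set N : ℤ := ∑ j, k j * z j with hN
  have hdot : dotZR k (ξ + (2 * Real.pi) • v) = dotZR k ξ + 2 * Real.pi * (N : ℝ) := by
    unfold dotZR
    have h1 : ∀ j, (k j : ℝ) * (ξ + (2 * Real.pi) • v) j
        = (k j : ℝ) * ξ j + 2 * Real.pi * ((k j : ℝ) * (z j : ℝ)) := by
      intro j
      rw [Pi.add_apply, Pi.smul_apply, smul_eq_mul, hz j]; ring
    rw [Finset.sum_congr rfl fun j _ => h1 j, Finset.sum_add_distrib, ← Finset.mul_sum]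
    congr 1
    rw [hN]
    push_cast
    ring
  rw [hdot]
  congr 1
  have h2 : -(Complex.I * ((dotZR k ξ + 2 * Real.pi * (N : ℝ) : ℝ) : ℂ))
      = -(Complex.I * ((dotZR k ξ : ℝ) : ℂ)) + ((-N : ℤ) : ℂ) * (2 * (Real.pi : ℂ) * Complex.I) := by
    push_cast
    ring
  rw [h2, Complex.exp_add, Complex.exp_int_mul_two_pi_mul_I, mul_one]

lemma vt_congr {m : ℕ} {f g : Rd d → ℂ} (h : ∀ ξ, g ξ = f ξ) (hf : vanishesTo m f) :
    vanishesTo m g := by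
  have hfg : g = f := funext h
  rw [hfg]; exact hf

lemma vt_zero {m : ℕ} : vanishesTo m (fun _ : Rd d => (0 : ℂ)) := by
  intro j _
  rw [iteratedFDeriv_zero_fun]
  rfl

lemma vt_add {m : ℕ} {f g : Rd d → ℂ} (hf : ContDiff ℝ ⊤ f) (hg : ContDiff ℝ ⊤ g)
    (hf0 : vanishesTo m f) (hg0 : vanishesTo m g) :
    vanishesTo m (fun ξ => f ξ + g ξ) := by
  intro j hj
  rw [iteratedFDeriv_add_apply' (hf.of_le le_top).contDiffAt (hg.of_le le_top).contDiffAt, hf0 j hj, hg0 j hj, add_zero]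

lemma vt_neg {m : ℕ} {f : Rd d → ℂ} (hf0 : vanishesTo m f) :
    vanishesTo m (fun ξ => -f ξ) := by
  intro j hj
  have : (fun ξ : Rd d => -f ξ) = -f := rfl
  rw [this, iteratedFDeriv_neg_apply, hf0 j hj, neg_zero]

lemma vt_sub {m : ℕ} {f g : Rd d → ℂ} (hf : ContDiff ℝ ⊤ f) (hg : ContDiff ℝ ⊤ g)
    (hf0 : vanishesTo m f) (hg0 : vanishesTo m g) :
    vanishesTo m (fun ξ => f ξ - g ξ) :=
  vt_congr (fun ξ => sub_eq_add_neg (f ξ) (g ξ)) (vt_add hf hg.neg hf0 (vt_neg hg0))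

lemma vt_sum {m : ℕ} {ι : Type*} (s : Finset ι) (f : ι → Rd d → ℂ)
    (hs : ∀ i ∈ s, ContDiff ℝ ⊤ (f i)) (h0 : ∀ i ∈ s, vanishesTo m (f i)) :
    vanishesTo m (fun ξ => ∑ i ∈ s, f i ξ) := by
  classical
  induction s using Finset.induction with
  | empty => exact vt_congr (fun ξ => by simp) vt_zero
  | @insert a s ha ih =>
      refine vt_congr (fun ξ => Finset.sum_insert ha)
        (vt_add (hs a (Finset.mem_insert_self a s))
          (ContDiff.sum fun i hi => hs i (Finset.mem_insert_of_mem hi))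
          (h0 a (Finset.mem_insert_self a s))
          (ih (fun i hi => hs i (Finset.mem_insert_of_mem hi))
              (fun i hi => h0 i (Finset.mem_insert_of_mem hi))))

lemma vt_mul_left {m : ℕ} {f g : Rd d → ℂ} (hf : ContDiff ℝ ⊤ f) (hg : ContDiff ℝ ⊤ g)
    (hf0 : vanishesTo m f) : vanishesTo m (fun ξ => f ξ * g ξ) := by
  intro j hj
  rw [← norm_le_zero_iff]
  refine le_trans (norm_iteratedFDeriv_mul_le hf hg 0 le_top) (le_of_eq ?_)
  refine Finset.sum_eq_zero fun i hi => ?_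
  rw [hf0 i (lt_of_le_of_lt (Nat.lt_succ_iff.mp (Finset.mem_range.mp hi)) hj), norm_zero]
  ring

lemma vt_mul_right {m : ℕ} {f g : Rd d → ℂ} (hf : ContDiff ℝ ⊤ f) (hg : ContDiff ℝ ⊤ g)
    (hg0 : vanishesTo m g) : vanishesTo m (fun ξ => f ξ * g ξ) := by
  intro j hj
  rw [← norm_le_zero_iff]
  refine le_trans (norm_iteratedFDeriv_mul_le hf hg 0 le_top) (le_of_eq ?_)
  refine Finset.sum_eq_zero fun i _ => ?_
  rw [hg0 (j - i) (lt_of_le_of_lt (Nat.sub_le j i) hj), norm_zero]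
  ring

lemma vt_compL {m : ℕ} {f : Rd d → ℂ} (hf : ContDiff ℝ ⊤ f) (hf0 : vanishesTo m f)
    (L : Rd d →L[ℝ] Rd d) : vanishesTo m (fun ξ => f (L ξ)) := by
  intro j hj
  have h1 : (fun ξ => f (L ξ)) = f ∘ L := rfl
  rw [h1, L.iteratedFDeriv_comp_right hf _ (le_top : (j : WithTop ℕ∞) ≤ ⊤), map_zero, hf0 j hj]
  ext mm
  simp

def mulVecTL (M : Matrix (Fin d) (Fin d) ℤ) : Rd d →L[ℝ] Rd d :=
  LinearMap.toContinuousLinearMap (Matrix.mulVecLin ((M.map (Int.cast : ℤ → ℝ)).transpose))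

lemma mulVecTL_apply (M : Matrix (Fin d) (Fin d) ℤ) (ξ : Rd d) :
    mulVecTL M ξ = mulVecT M ξ := by
  funext i
  simp only [mulVecTL, LinearMap.coe_toContinuousLinearMap', Matrix.mulVecLin_apply,
    Matrix.mulVec_transpose, Matrix.vecMul, dotProduct, Matrix.map_apply, mulVecT]
  exact Finset.sum_congr rfl fun j _ => by ring

lemma contDiff_shift {f : Rd d → ℂ} (hf : ContDiff ℝ ⊤ f) (c : Rd d) :
    ContDiff ℝ ⊤ (fun ξ => f (ξ + c)) :=
  hf.comp (contDiff_id.add contDiff_const)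

lemma contDiff_compT {f : Rd d → ℂ} (hf : ContDiff ℝ ⊤ f) (M : Matrix (Fin d) (Fin d) ℤ) :
    ContDiff ℝ ⊤ (fun ξ => f (mulVecT M ξ)) := by
  have h1 : (fun ξ => f (mulVecT M ξ)) = fun ξ => f (mulVecTL M ξ) := by
    funext ξ; rw [mulVecTL_apply]
  rw [h1]
  exact hf.comp (mulVecTL M).contDiff

lemma vt_compT {m : ℕ} {f : Rd d → ℂ} (hf : ContDiff ℝ ⊤ f) (hf0 : vanishesTo m f)
    (M : Matrix (Fin d) (Fin d) ℤ) : vanishesTo m (fun ξ => f (mulVecT M ξ)) := by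
  have h1 : (fun ξ => f (mulVecT M ξ)) = fun ξ => f (mulVecTL M ξ) := by
    funext ξ; rw [mulVecTL_apply]
  rw [h1]
  exact vt_compL hf hf0 (mulVecTL M)

lemma contDiff_mul_entry {p q s : ℕ} {A : Rd d → Matrix (Fin p) (Fin q) ℂ}
    {B : Rd d → Matrix (Fin q) (Fin s) ℂ}
    (hA : ∀ i j, ContDiff ℝ ⊤ fun ξ => A ξ i j) (hB : ∀ i j, ContDiff ℝ ⊤ fun ξ => B ξ i j)
    (i : Fin p) (j : Fin s) : ContDiff ℝ ⊤ fun ξ => (A ξ * B ξ) i j := by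
  simp only [Matrix.mul_apply]
  exact ContDiff.sum fun k _ => (hA i k).mul (hB k j)

lemma mulVecT_add (M : Matrix (Fin d) (Fin d) ℤ) (ξ η : Rd d) :
    mulVecT M (ξ + η) = mulVecT M ξ + mulVecT M η := by
  funext i
  simp [mulVecT, mul_add, Finset.sum_add_distrib]

lemma mulVecT_smul (M : Matrix (Fin d) (Fin d) ℤ) (cr : ℝ) (ξ : Rd d) :
    mulVecT M (cr • ξ) = cr • mulVecT M ξ := by
  funext i
  simp only [mulVecT, Pi.smul_apply, smul_eq_mul, Finset.mul_sum]
  exact Finset.sum_congr rfl fun j _ => by ring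

lemma sum_sub_mul {r : ℕ} (P Q R : Fin r → ℂ) (δc : ℂ) :
    ∑ k, (P k - δc * Q k) * R k = (∑ k, P k * R k) - δc * ∑ k, Q k * R k := by
  rw [Finset.mul_sum, ← Finset.sum_sub_distrib]
  exact Finset.sum_congr rfl fun k _ => by ring

end Aux

lemma ite_val_eq {r : ℕ} (hr0 : 0 < r) (k : Fin r) :
    (if (k : ℕ) = 0 then (1 : ℂ) else 0) = if k = ⟨0, hr0⟩ then 1 else 0 := by
  by_cases hk : (k : ℕ) = 0
  · have hk2 : k = ⟨0, hr0⟩ := Fin.ext (by simp [hk])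
    simp [hk, hk2]
  · have hk2 : k ≠ ⟨0, hr0⟩ := fun h => hk (by rw [h])
    simp [hk, hk2]

lemma pt_rowkey {d r : ℕ} (M : Matrix (Fin d) (Fin d) ℤ)
    (a U Uinv : Zd d →₀ Matrix (Fin r) (Fin r) ℂ)
    (vgu : Zd d →₀ Matrix (Fin 1) (Fin r) ℂ) (ω : Rd d) (i : Fin r) (ξ : Rd d)
    (hA : (symbol vgu (mulVecT M ξ) * symbol Uinv (mulVecT M ξ)) *
        mraF M U Uinv a (ξ + (2 * Real.pi) • ω)
        = (symbol vgu (mulVecT M ξ) * symbol a (ξ + (2 * Real.pi) • ω)) *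
          symbol Uinv (ξ + (2 * Real.pi) • ω)) :
    ((symbol vgu (mulVecT M ξ) * symbol Uinv (mulVecT M ξ)) *
        mraF M U Uinv a (ξ + (2 * Real.pi) • ω)) 0 i -
      (if ω = (0 : Rd d) then 1 else 0) * (symbol vgu ξ * symbol Uinv ξ) 0 i
    = ∑ k, ((symbol vgu (mulVecT M ξ) * symbol a (ξ + (2 * Real.pi) • ω)) 0 k -
        (if ω = (0 : Rd d) then 1 else 0) * symbol vgu ξ 0 k) *
      symbol Uinv (ξ + (2 * Real.pi) • ω) k i := by
  rw [sum_sub_mul, ← Matrix.mul_apply, ← Matrix.mul_apply, ← hA]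
  congr 1
  by_cases hω0 : ω = (0 : Rd d)
  · subst hω0; simp
  · simp [hω0]

lemma rowkey_hA {d r : ℕ} (M : Matrix (Fin d) (Fin d) ℤ)
    (a U Uinv : Zd d →₀ Matrix (Fin r) (Fin r) ℂ)
    (vgu : Zd d →₀ Matrix (Fin 1) (Fin r) ℂ) (ω : Rd d) (ξ : Rd d)
    (hUinv : symbol Uinv (mulVecT M ξ) * symbol U (mulVecT M ξ) = 1)
    (hper : symbol U (mulVecT M (ξ + (2 * Real.pi) • ω)) = symbol U (mulVecT M ξ)) :
    (symbol vgu (mulVecT M ξ) * symbol Uinv (mulVecT M ξ)) *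
        mraF M U Uinv a (ξ + (2 * Real.pi) • ω)
      = (symbol vgu (mulVecT M ξ) * symbol a (ξ + (2 * Real.pi) • ω)) *
        symbol Uinv (ξ + (2 * Real.pi) • ω) := by
  show (symbol vgu (mulVecT M ξ) * symbol Uinv (mulVecT M ξ)) *
    (symbol U (mulVecT M (ξ + (2 * Real.pi) • ω)) * symbol a (ξ + (2 * Real.pi) • ω) *
      symbol Uinv (ξ + (2 * Real.pi) • ω)) = _
  rw [hper]
  calc (symbol vgu (mulVecT M ξ) * symbol Uinv (mulVecT M ξ)) *
        (symbol U (mulVecT M ξ) * symbol a (ξ + (2 * Real.pi) • ω) *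
          symbol Uinv (ξ + (2 * Real.pi) • ω))
      = symbol vgu (mulVecT M ξ) * ((symbol Uinv (mulVecT M ξ) * symbol U (mulVecT M ξ)) *
          (symbol a (ξ + (2 * Real.pi) • ω) * symbol Uinv (ξ + (2 * Real.pi) • ω))) := by
        simp only [Matrix.mul_assoc]
    _ = (symbol vgu (mulVecT M ξ) * symbol a (ξ + (2 * Real.pi) • ω)) *
          symbol Uinv (ξ + (2 * Real.pi) • ω) := by
        rw [hUinv, Matrix.one_mul, Matrix.mul_assoc]

lemma pt_row {d r : ℕ} (hr0 : 0 < r) (M : Matrix (Fin d) (Fin d) ℤ)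
    (a U Uinv : Zd d →₀ Matrix (Fin r) (Fin r) ℂ)
    (vgu : Zd d →₀ Matrix (Fin 1) (Fin r) ℂ) (ω : Rd d) (j : Fin r) (ξ : Rd d) :
    mraF M U Uinv a (ξ + (2 * Real.pi) • ω) ⟨0, hr0⟩ j -
      (if ω = (0 : Rd d) then 1 else 0) * (symbol vgu ξ * symbol Uinv ξ) 0 j
    = (((symbol vgu (mulVecT M ξ) * symbol Uinv (mulVecT M ξ)) *
          mraF M U Uinv a (ξ + (2 * Real.pi) • ω)) 0 j -
        (if ω = (0 : Rd d) then 1 else 0) * (symbol vgu ξ * symbol Uinv ξ) 0 j)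
      - ∑ k, ((symbol vgu (mulVecT M ξ) * symbol Uinv (mulVecT M ξ)) 0 k -
          if (k : ℕ) = 0 then 1 else 0) * mraF M U Uinv a (ξ + (2 * Real.pi) • ω) k j := by
  have hs : ∑ k, ((symbol vgu (mulVecT M ξ) * symbol Uinv (mulVecT M ξ)) 0 k -
      if (k : ℕ) = 0 then 1 else 0) * mraF M U Uinv a (ξ + (2 * Real.pi) • ω) k j
      = ((symbol vgu (mulVecT M ξ) * symbol Uinv (mulVecT M ξ)) *
          mraF M U Uinv a (ξ + (2 * Real.pi) • ω)) 0 j -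
        mraF M U Uinv a (ξ + (2 * Real.pi) • ω) ⟨0, hr0⟩ j := by
    conv_rhs => rw [Matrix.mul_apply]
    simp only [sub_mul, Finset.sum_sub_distrib, ite_val_eq hr0, ite_mul, one_mul, zero_mul,
      Finset.sum_ite_eq', Finset.mem_univ, if_true]
  rw [hs]; ring

lemma pt_col {d r : ℕ} (hr0 : 0 < r) (M : Matrix (Fin d) (Fin d) ℤ)
    (a U Uinv : Zd d →₀ Matrix (Fin r) (Fin r) ℂ)
    (φhat : Rd d → Matrix (Fin r) (Fin 1) ℂ) (i : Fin r) (ξ : Rd d)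
    (hrefin : symbol U (mulVecT M ξ) * φhat (mulVecT M ξ) =
      mraF M U Uinv a ξ * (symbol U ξ * φhat ξ)) :
    mraF M U Uinv a ξ i ⟨0, hr0⟩ - (if (i : ℕ) = 0 then 1 else 0)
    = ((symbol U (mulVecT M ξ) * φhat (mulVecT M ξ)) i 0 - if (i : ℕ) = 0 then 1 else 0)
      - ∑ k, mraF M U Uinv a ξ i k *
          ((symbol U ξ * φhat ξ) k 0 - if (k : ℕ) = 0 then 1 else 0) := by
  have hs : ∑ k, mraF M U Uinv a ξ i k *
      ((symbol U ξ * φhat ξ) k 0 - if (k : ℕ) = 0 then 1 else 0)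
      = (symbol U (mulVecT M ξ) * φhat (mulVecT M ξ)) i 0 -
        mraF M U Uinv a ξ i ⟨0, hr0⟩ := by
    conv_rhs => rw [hrefin, Matrix.mul_apply]
    simp only [mul_sub, Finset.sum_sub_distrib, ite_val_eq hr0, mul_ite, mul_one, mul_zero,
      Finset.sum_ite_eq', Finset.mem_univ, if_true]
  rw [hs]; ring


/-- standard `(m,n)`-normal form: under the normal form conclusion, the
filter `mra = U(M^T·) a U^{-1}` takes the standard `(m,n)`-normal form, `mrφ = Uφ` is
`mra`-refinable, and `mra` has order `m` sum rules with matching filter `mrυ = υU^{-1}`. -/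
theorem stmt8 {d r : ℕ} (hr : 2 ≤ r)
    (M : Matrix (Fin d) (Fin d) ℤ) (hM : IsDilation M)
    (m : ℕ) (a : Zd d →₀ Matrix (Fin r) (Fin r) ℂ)
    (φhat : Rd d → Matrix (Fin r) (Fin 1) ℂ)
    (hφ : ∀ i, ContDiff ℝ ⊤ fun ξ => φhat ξ i 0)
    (href : ∀ ξ, φhat (mulVecT M ξ) = symbol a ξ * φhat ξ)
    (hφ0 : φhat 0 ≠ 0)
    (vgu : Zd d →₀ Matrix (Fin 1) (Fin r) ℂ)
    (hsr : HasSumRules M m a vgu)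
    (hnorm : (symbol vgu 0 * φhat 0) 0 0 = 1)
    (n : ℕ) (hn : 0 < n)
    (U Uinv : Zd d →₀ Matrix (Fin r) (Fin r) ℂ)
    (hUinv : ∀ ξ : Rd d, symbol U ξ * symbol Uinv ξ = 1 ∧ symbol Uinv ξ * symbol U ξ = 1)
    (hUφ : ∀ i : Fin r, vanishesTo n (fun ξ =>
      (symbol U ξ * φhat ξ) i 0 - (if (i : ℕ) = 0 then 1 else 0)))
    (hUv : ∀ i : Fin r, vanishesTo m (fun ξ =>
      (symbol vgu ξ * symbol Uinv ξ) 0 i - (if (i : ℕ) = 0 then 1 else 0))) :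
    -- (1,1)-block: mra_{1,1}(ξ) = 1 + O(‖ξ‖^n)
    (∀ i j : Fin r, (i : ℕ) = 0 → (j : ℕ) = 0 →
      vanishesTo n (fun ξ => mraF M U Uinv a ξ i j - 1)) ∧
    -- (1,1)-block: mra_{1,1}(ξ + 2πω) = O(‖ξ‖^m) for ω ∈ Ω_M \ {0}
    (∀ ω ∈ OmegaSet M, ω ≠ 0 → ∀ i j : Fin r, (i : ℕ) = 0 → (j : ℕ) = 0 →
      vanishesTo m (fun ξ => mraF M U Uinv a (ξ + (2 * Real.pi) • ω) i j)) ∧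
    -- (1,2)-block: mra_{1,2}(ξ + 2πω) = O(‖ξ‖^m) for all ω ∈ Ω_M
    (∀ ω ∈ OmegaSet M, ∀ i j : Fin r, (i : ℕ) = 0 → (j : ℕ) ≠ 0 →
      vanishesTo m (fun ξ => mraF M U Uinv a (ξ + (2 * Real.pi) • ω) i j)) ∧
    -- (2,1)-block: mra_{2,1}(ξ) = O(‖ξ‖^n)
    (∀ i j : Fin r, (i : ℕ) ≠ 0 → (j : ℕ) = 0 →
      vanishesTo n (fun ξ => mraF M U Uinv a ξ i j)) ∧
    -- refinability of mrφ = U φ with respect to mra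
    (∀ ξ, symbol U (mulVecT M ξ) * φhat (mulVecT M ξ) =
      mraF M U Uinv a ξ * (symbol U ξ * φhat ξ)) ∧
    -- mra has order m sum rules with matching filter mrυ = vgu U^{-1}
    (∀ ω ∈ OmegaSet M, ∀ i : Fin r,
      vanishesTo m (fun ξ =>
        ((symbol vgu (mulVecT M ξ) * symbol Uinv (mulVecT M ξ)) *
            mraF M U Uinv a (ξ + (2 * Real.pi) • ω)) 0 i -
          (if ω = (0 : Rd d) then 1 else 0) * (symbol vgu ξ * symbol Uinv ξ) 0 i)) :=
    by
  classical
  have hr0 : 0 < r := by omega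
  -- basic smoothness facts
  have hφs : ∀ (i : Fin r) (j : Fin 1), ContDiff ℝ ⊤ fun ξ => φhat ξ i j := by
    intro i j
    have hj : j = 0 := Subsingleton.elim _ _
    rw [hj]; exact hφ i
  have hψs : ∀ k : Fin r, ContDiff ℝ ⊤ fun ξ => (symbol U ξ * φhat ξ) k 0 :=
    fun k => contDiff_mul_entry (contDiff_symbol U) hφs k 0
  have hνs : ∀ k : Fin r, ContDiff ℝ ⊤ fun ξ => (symbol vgu ξ * symbol Uinv ξ) 0 k :=
    fun k => contDiff_mul_entry (contDiff_symbol vgu) (contDiff_symbol Uinv) 0 k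
  have hmra_s : ∀ (c : Rd d) (i j : Fin r),
      ContDiff ℝ ⊤ fun ξ => mraF M U Uinv a (ξ + c) i j := by
    intro c i j
    exact contDiff_mul_entry
      (A := fun ξ => symbol U (mulVecT M (ξ + c)) * symbol a (ξ + c))
      (B := fun ξ => symbol Uinv (ξ + c))
      (contDiff_mul_entry
        (A := fun ξ => symbol U (mulVecT M (ξ + c)))
        (B := fun ξ => symbol a (ξ + c))
        (fun i j => contDiff_shift (contDiff_compT (contDiff_symbol U i j) M) c)
        (fun i j => contDiff_shift (contDiff_symbol a i j) c))
      (fun i j => contDiff_shift (contDiff_symbol Uinv i j) c) i j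
  have hmra0 : ∀ i j : Fin r, ContDiff ℝ ⊤ fun ξ => mraF M U Uinv a ξ i j := by
    intro i j
    have h := hmra_s 0 i j
    simpa using h
  -- refinability
  have hrefin : ∀ ξ, symbol U (mulVecT M ξ) * φhat (mulVecT M ξ) =
      mraF M U Uinv a ξ * (symbol U ξ * φhat ξ) := by
    intro ξ
    rw [href ξ]
    show symbol U (mulVecT M ξ) * (symbol a ξ * φhat ξ) =
      symbol U (mulVecT M ξ) * symbol a ξ * symbol Uinv ξ * (symbol U ξ * φhat ξ)
    rw [Matrix.mul_assoc (symbol U (mulVecT M ξ) * symbol a ξ) (symbol Uinv ξ),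
      ← Matrix.mul_assoc (symbol Uinv ξ), (hUinv ξ).2, Matrix.one_mul,
      Matrix.mul_assoc]
  -- column facts
  have hψL : ∀ k : Fin r, vanishesTo n (fun ξ =>
      (symbol U (mulVecT M ξ) * φhat (mulVecT M ξ)) k 0 - if (k : ℕ) = 0 then 1 else 0) :=
    fun k => vt_compT ((hψs k).sub contDiff_const) (hUφ k) M
  have hcol : ∀ i : Fin r, vanishesTo n (fun ξ =>
      mraF M U Uinv a ξ i ⟨0, hr0⟩ - if (i : ℕ) = 0 then 1 else 0) := by
    intro i
    refine vt_congr (fun ξ => pt_col hr0 M a U Uinv φhat i ξ (hrefin ξ)) ?_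
    refine vt_sub ((contDiff_compT (hψs i) M).sub contDiff_const)
      (ContDiff.sum fun k _ => (hmra0 i k).mul ((hψs k).sub contDiff_const))
      (hψL i)
      (vt_sum Finset.univ _ (fun k _ => (hmra0 i k).mul ((hψs k).sub contDiff_const))
        (fun k _ => vt_mul_right (hmra0 i k) ((hψs k).sub contDiff_const) (hUφ k)))
  -- row facts
  have hωint : ∀ ω ∈ OmegaSet M, ∀ (w : Zd d →₀ Matrix (Fin r) (Fin r) ℂ) (ξ : Rd d),
      symbol w (mulVecT M (ξ + (2 * Real.pi) • ω)) = symbol w (mulVecT M ξ) := by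
    intro ω hω w ξ
    rw [mulVecT_add, mulVecT_smul]
    exact symbol_periodic w (mulVecT M ξ) (mulVecT M ω) hω.1
  have hrowkey : ∀ ω ∈ OmegaSet M, ∀ i : Fin r,
      vanishesTo m (fun ξ =>
        ((symbol vgu (mulVecT M ξ) * symbol Uinv (mulVecT M ξ)) *
            mraF M U Uinv a (ξ + (2 * Real.pi) • ω)) 0 i -
          (if ω = (0 : Rd d) then 1 else 0) * (symbol vgu ξ * symbol Uinv ξ) 0 i) := by
    intro ω hω i
    refine vt_congr (fun ξ => pt_rowkey M a U Uinv vgu ω i ξ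
      (rowkey_hA M a U Uinv vgu ω ξ (hUinv (mulVecT M ξ)).2 (hωint ω hω U ξ))) ?_
    refine vt_sum Finset.univ _ (fun k _ => ?_) (fun k _ => ?_)
    · exact ContDiff.mul
        ((contDiff_mul_entry (A := fun ξ => symbol vgu (mulVecT M ξ))
            (B := fun ξ => symbol a (ξ + (2 * Real.pi) • ω))
            (fun i j => contDiff_compT (contDiff_symbol vgu i j) M)
            (fun i j => contDiff_shift (contDiff_symbol a i j) _) 0 k).sub
          (contDiff_const.mul (contDiff_symbol vgu 0 k)))
        (contDiff_shift (contDiff_symbol Uinv k i) _)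
    · exact vt_mul_left
        ((contDiff_mul_entry (A := fun ξ => symbol vgu (mulVecT M ξ))
            (B := fun ξ => symbol a (ξ + (2 * Real.pi) • ω))
            (fun i j => contDiff_compT (contDiff_symbol vgu i j) M)
            (fun i j => contDiff_shift (contDiff_symbol a i j) _) 0 k).sub
          (contDiff_const.mul (contDiff_symbol vgu 0 k)))
        (contDiff_shift (contDiff_symbol Uinv k i) _)
        (hsr.2 ω hω k)
  have hrow : ∀ ω ∈ OmegaSet M, ∀ j : Fin r,
      vanishesTo m (fun ξ => mraF M U Uinv a (ξ + (2 * Real.pi) • ω) ⟨0, hr0⟩ j -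
        (if ω = (0 : Rd d) then 1 else 0) * (symbol vgu ξ * symbol Uinv ξ) 0 j) := by
    intro ω hω j
    refine vt_congr (fun ξ => pt_row hr0 M a U Uinv vgu ω j ξ) ?_
    refine vt_sub ?_ ?_ (hrowkey ω hω j)
      (vt_sum Finset.univ _ (fun k _ => ?_) (fun k _ => ?_))
    · exact ContDiff.sub
        (contDiff_mul_entry
          (A := fun ξ => symbol vgu (mulVecT M ξ) * symbol Uinv (mulVecT M ξ))
          (B := fun ξ => mraF M U Uinv a (ξ + (2 * Real.pi) • ω))
          (fun i k => by
            have hi : i = 0 := Subsingleton.elim _ _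
            rw [hi]; exact contDiff_compT (hνs k) M)
          (fun k l => hmra_s _ k l) 0 j)
        (contDiff_const.mul (hνs j))
    · exact ContDiff.sum fun k _ =>
        ((contDiff_compT (hνs k) M).sub contDiff_const).mul (hmra_s _ k j)
    · exact ((contDiff_compT (hνs k) M).sub contDiff_const).mul (hmra_s _ k j)
    · exact vt_mul_left ((contDiff_compT (hνs k) M).sub contDiff_const)
        (hmra_s _ k j) (vt_compT ((hνs k).sub contDiff_const) (hUv k) M)
  refine ⟨?_, ?_, ?_, ?_, hrefin, ?_⟩
  · -- (1,1) block near 0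
    intro i j hi hj
    obtain rfl : j = (⟨0, hr0⟩ : Fin r) := Fin.ext (by simp [hj])
    refine vt_congr (fun ξ => ?_) (hcol i)
    simp [hi]
  · -- (1,1) block at nonzero ω
    intro ω hω hω0 i j hi hj
    obtain rfl : i = (⟨0, hr0⟩ : Fin r) := Fin.ext (by simp [hi])
    obtain rfl : j = (⟨0, hr0⟩ : Fin r) := Fin.ext (by simp [hj])
    refine vt_congr (fun ξ => ?_) (hrow ω hω ⟨0, hr0⟩)
    simp [hω0]
  · -- (1,2) block
    intro ω hω i j hi hj
    obtain rfl : i = (⟨0, hr0⟩ : Fin r) := Fin.ext (by simp [hi])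
    by_cases hω0 : ω = (0 : Rd d)
    · subst hω0
      refine vt_congr (f := fun ξ =>
        (mraF M U Uinv a (ξ + (2 * Real.pi) • (0 : Rd d)) ⟨0, hr0⟩ j -
          (if (0 : Rd d) = (0 : Rd d) then 1 else 0) * (symbol vgu ξ * symbol Uinv ξ) 0 j)
        + ((symbol vgu ξ * symbol Uinv ξ) 0 j - if (j : ℕ) = 0 then 1 else 0))
        (fun ξ => ?_) (vt_add ?_ ((hνs j).sub contDiff_const) (hrow 0 hω j) (hUv j))
      · simp [hj]
      · exact (hmra_s _ ⟨0, hr0⟩ j).sub (contDiff_const.mul (hνs j))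
    · refine vt_congr (fun ξ => ?_) (hrow ω hω j)
      simp [hω0]
  · -- (2,1) block
    intro i j hi hj
    obtain rfl : j = (⟨0, hr0⟩ : Fin r) := Fin.ext (by simp [hj])
    refine vt_congr (fun ξ => ?_) (hcol i)
    simp [hi]
  · -- sum rules
    intro ω hω i
    exact hrowkey ω hω i


end
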